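/- arXiv:1709.01918 — 8 statements merged into one kernel-verified Lean document; each statement's English description precedes it below -/
import Mathlib

section
/- In a dense linear order without endpoints (a model of DLO, e.g. ℚ), define for finite sets A, B, C: A ⫫_C B iff A ∩ B ⊆ C and for all a ∈ A \ C, b ∈ B \ C realizing the same cut over C (i.e., for all c ∈ C, a < c ↔ b < c), one has a < b. Then this relation satisfies transitivity: if A ⫫_{D ∪ C} B and D ⫫_C B, then A ∪ D ⫫_C B. -/
/-- `a` and `b` realize the same cut over the finite set `C`. -/
def sameCutQ (C : Finset ℚ) (a b : ℚ) : Prop :=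
  ∀ c ∈ C, (a < c ↔ b < c) ∧ (c < a ↔ c < b)

/-- The canonical independence relation on finite subsets of `(ℚ, <)`. -/
def indQ (A C B : Finset ℚ) : Prop :=
  A ∩ B ⊆ C ∧ ∀ a ∈ A, a ∉ C → ∀ b ∈ B, b ∉ C → sameCutQ C a b → a < b

/-- Transitivity of the DLO independence relation. -/
theorem stmt_5 (A B C D : Finset ℚ) (h1 : indQ A (D ∪ C) B) (h2 : indQ D C B) :
    indQ (A ∪ D) C B := by
  obtain ⟨h1i, h1⟩ := h1
  obtain ⟨h2i, h2⟩ := h2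
  constructor
  · intro x hx
    simp only [Finset.mem_inter, Finset.mem_union] at hx
    obtain ⟨hA | hD, hB⟩ := hx
    · have := h1i (Finset.mem_inter.mpr ⟨hA, hB⟩)
      rcases Finset.mem_union.mp this with hD | hC
      · exact h2i (Finset.mem_inter.mpr ⟨hD, hB⟩)
      · exact hC
    · exact h2i (Finset.mem_inter.mpr ⟨hD, hB⟩)
  · intro a ha haC b hb hbC hcut
    rcases Finset.mem_union.mp ha with haA | haD
    swap
    · exact h2 a haD haC b hb hbC hcut
    by_cases haD : a ∈ D
    · exact h2 a haD haC b hb hbC hcut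
    have hbD : b ∉ D := by
      intro hbD
      exact lt_irrefl b (h2 b hbD hbC b hb hbC (fun c hc => ⟨Iff.rfl, Iff.rfl⟩))
    by_contra hab
    push_neg at hab
    have hne : a ≠ b := by
      intro h
      subst h
      have := h1i (Finset.mem_inter.mpr ⟨haA, hb⟩)
      rcases Finset.mem_union.mp this with h | h
      · exact haD h
      · exact haC h
    have hba : b < a := lt_of_le_of_ne hab (fun h => hne h.symm)
    -- every c ∈ C lies outside [b, a]
    have hC : ∀ c ∈ C, c < b ∨ a < c := by
      intro c hc
      obtain ⟨hc1, hc2⟩ := hcut c hc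
      by_contra h
      push_neg at h
      obtain ⟨hbc, hca⟩ := h
      have hbc' : b < c := lt_of_le_of_ne hbc (fun h => hbC (h ▸ hc))
      have hca' : c < a := lt_of_le_of_ne hca (fun h => haC (h ▸ hc))
      exact absurd (hc2.mp hca') (not_lt.mpr hbc'.le)
    -- no d ∈ D \ C lies in [b, a]
    have hD : ∀ d ∈ D, d ∉ C → d < b ∨ a < d := by
      intro d hd hdC
      by_contra h
      push_neg at h
      obtain ⟨hbd, hda⟩ := h
      have hbd' : b < d := lt_of_le_of_ne hbd (fun h => hbD (h ▸ hd))
      have hda' : d < a := lt_of_le_of_ne hda (fun h => haD (h ▸ hd))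
      have hdb : d < b := by
        apply h2 d hd hdC b hb hbC
        intro c hc
        refine ⟨⟨fun h' => ?_, fun h' => ?_⟩, ⟨fun h' => ?_, fun h' => ?_⟩⟩ <;>
          rcases hC c hc with h'' | h'' <;> linarith
      linarith
    -- a and b realize the same cut over D ∪ C
    have hcut' : sameCutQ (D ∪ C) a b := by
      intro d hd
      rcases Finset.mem_union.mp hd with hdD | hdC
      · by_cases hdC : d ∈ C
        · exact hcut d hdC
        · rcases hD d hdD hdC with h' | h' <;>
            exact ⟨⟨fun h'' => by linarith, fun h'' => by linarith⟩,
                   ⟨fun h'' => by linarith, fun h'' => by linarith⟩⟩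
      · exact hcut d hdC
    have haDC : a ∉ D ∪ C := by
      simp only [Finset.mem_union]
      rintro (h | h)
      exacts [haD h, haC h]
    have hbDC : b ∉ D ∪ C := by
      simp only [Finset.mem_union]
      rintro (h | h)
      exacts [hbD h, hbC h]
    exact absurd (h1 a haA haDC b hb hbDC hcut') (not_lt.mpr hba.le)
end

section
/- Let (M, <, ∧) be a meet-tree (a partial order in which the set of elements below any element is linearly ordered, with a binary meet operation giving the infimum of any two elements) in which the order is dense and every element has incomparable elements above it. If σ is an automorphism of M with no fixed points, then there exists a branch (maximal downward-closed chain) B ⊆ M with σ(B) = B. -/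
/-- In a dense, everywhere-branching meet-tree, a fixed-point-free automorphism fixes
setwise some branch (maximal downward-closed chain). -/
theorem stmt_6 {M : Type*} [SemilatticeInf M]
    (htree : ∀ a : M, IsChain (· ≤ ·) {x : M | x ≤ a})
    (hdense : ∀ a b : M, a < b → ∃ c : M, a < c ∧ c < b)
    (hbranch : ∀ a : M, ∃ b c : M, a < b ∧ a < c ∧ ¬ b ≤ c ∧ ¬ c ≤ b)
    (σ : Equiv.Perm M) (hmono : ∀ a b : M, a ≤ b ↔ σ a ≤ σ b)
    (hinf : ∀ a b : M, σ (a ⊓ b) = σ a ⊓ σ b)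
    (hfix : ∀ x : M, σ x ≠ x) :
    ∃ B : Set M, IsChain (· ≤ ·) B ∧ (∀ x ∈ B, ∀ y : M, y ≤ x → y ∈ B) ∧
      (∀ B' : Set M, IsChain (· ≤ ·) B' → B ⊆ B' → B' = B) ∧ σ '' B = B := by
  classical
  have hσ : ∀ a b : M, a ≤ b → σ a ≤ σ b := fun a b h => (hmono a b).1 h
  have hσ' : ∀ a b : M, a ≤ b → σ⁻¹ a ≤ σ⁻¹ b := by
    intro a b h
    have h2 := (hmono (σ⁻¹ a) (σ⁻¹ b)).2
    simp only [Equiv.Perm.inv_def, Equiv.apply_symm_apply] at h2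
    exact h2 h
  have hpow : ∀ n : ℤ, ∀ a b : M, a ≤ b → (σ ^ n) a ≤ (σ ^ n) b := by
    intro n
    induction n using Int.induction_on with
    | zero => intro a b h; simpa using h
    | succ k ih =>
        intro a b h
        rw [zpow_add_one]
        simp only [Equiv.Perm.mul_apply]
        exact ih _ _ (hσ _ _ h)
    | pred k ih =>
        intro a b h
        rw [zpow_sub_one]
        simp only [Equiv.Perm.mul_apply]
        exact ih _ _ (hσ' _ _ h)
  -- the family of σ-invariant downward-closed chains
  set S : Set (Set M) :=
    {C | IsChain (· ≤ ·) C ∧ (∀ x ∈ C, ∀ y : M, y ≤ x → y ∈ C) ∧ σ '' C = C} with hS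
  have hzorn : ∃ C, Maximal (· ∈ S) C := by
    apply zorn_subset
    intro c hc hchain
    refine ⟨⋃₀ c, ⟨?_, ?_, ?_⟩, fun s hs => Set.subset_sUnion_of_mem hs⟩
    · intro x hx y hy hne
      obtain ⟨s, hs, hxs⟩ := hx
      obtain ⟨t, ht, hyt⟩ := hy
      rcases hchain.total hs ht with h | h
      · exact (hc ht).1 (h hxs) hyt hne
      · exact (hc hs).1 hxs (h hyt) hne
    · rintro x ⟨s, hs, hxs⟩ y hy
      exact ⟨s, hs, (hc hs).2.1 x hxs y hy⟩
    · ext x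
      constructor
      · rintro ⟨z, ⟨s, hs, hzs⟩, rfl⟩
        exact ⟨s, hs, (hc hs).2.2 ▸ ⟨z, hzs, rfl⟩⟩
      · rintro ⟨s, hs, hxs⟩
        have hx' : x ∈ σ '' s := (hc hs).2.2.symm ▸ hxs
        obtain ⟨z, hzs, rfl⟩ := hx'
        exact ⟨z, ⟨s, hs, hzs⟩, rfl⟩
  obtain ⟨C, hC⟩ := hzorn
  obtain ⟨hCchain, hCdown, hCinv⟩ := hC.1
  refine ⟨C, hCchain, hCdown, ?_, hCinv⟩
  intro B' hB' hsub
  refine Set.Subset.antisymm ?_ hsub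
  by_contra hns
  obtain ⟨y, hyB', hyC⟩ := Set.not_subset.1 hns
  -- every element of C is ≤ y
  have hcy : ∀ c ∈ C, c ≤ y := by
    intro c hc
    rcases hB' (hsub hc) hyB' (fun h => hyC (h ▸ hc)) with h | h
    · exact h
    · exact absurd (hCdown c hc y h) hyC
  have hcσy : ∀ c ∈ C, c ≤ σ y := by
    intro c hc
    have hc' : c ∈ σ '' C := hCinv.symm ▸ hc
    obtain ⟨c', hc'C, rfl⟩ := hc'
    exact hσ _ _ (hcy c' hc'C)
  set w : M := y ⊓ σ y with hw
  have hcw : ∀ c ∈ C, c ≤ w := fun c hc => le_inf (hcy c hc) (hcσy c hc)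
  have hwC : w ∉ C := by
    intro hwmem
    have h1 : σ w ∈ C := hCinv ▸ ⟨w, hwmem, rfl⟩
    have h2 : σ w ≤ w := hcw _ h1
    obtain ⟨w', hw'C, hw'⟩ := (hCinv.symm ▸ hwmem : w ∈ σ '' C)
    have h3 : w ≤ σ w := by
      have h4 := hσ _ _ (hcw w' hw'C)
      rwa [hw'] at h4
    exact hfix w (le_antisymm h2 h3)
  -- w and σ w are comparable (both ≤ σ y)
  have hcomp : w ≤ σ w ∨ σ w ≤ w := by
    have h1 : w ≤ σ y := inf_le_right
    have h2 : σ w ≤ σ y := hσ _ _ inf_le_left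
    exact htree (σ y) h1 h2 (Ne.symm (hfix w))
  -- the orbit of w is totally ordered
  have hmon : (∀ m n : ℤ, m ≤ n → (σ ^ m) w ≤ (σ ^ n) w) ∨
      (∀ m n : ℤ, m ≤ n → (σ ^ n) w ≤ (σ ^ m) w) := by
    rcases hcomp with h | h
    · left
      have hj : ∀ j : ℕ, w ≤ (σ ^ (j : ℤ)) w := by
        intro j
        induction j with
        | zero => simp
        | succ i ih =>
            have he : σ ^ ((i : ℤ) + 1) = σ ^ (i : ℤ) * σ := zpow_add_one σ _
            have : w ≤ (σ ^ ((i : ℤ) + 1)) w := by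
              rw [he]
              exact le_trans ih (by simpa using hpow (i : ℤ) _ _ h)
            simpa [Int.natCast_succ] using this
      intro m n hmn
      have hn' : n = m + ((n - m).toNat : ℤ) := by
        rw [Int.toNat_of_nonneg (by omega)]; omega
      calc (σ ^ m) w ≤ (σ ^ m) ((σ ^ (((n - m).toNat : ℕ) : ℤ)) w) := hpow _ _ _ (hj _)
        _ = (σ ^ (m + (((n - m).toNat : ℕ) : ℤ))) w := by rw [zpow_add]; rfl
        _ = (σ ^ n) w := by rw [← hn']
    · right
      have hj : ∀ j : ℕ, (σ ^ (j : ℤ)) w ≤ w := by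
        intro j
        induction j with
        | zero => simp
        | succ i ih =>
            have he : σ ^ ((i : ℤ) + 1) = σ ^ (i : ℤ) * σ := zpow_add_one σ _
            have : (σ ^ ((i : ℤ) + 1)) w ≤ w := by
              rw [he]
              exact le_trans (by simpa using hpow (i : ℤ) _ _ h) ih
            simpa [Int.natCast_succ] using this
      intro m n hmn
      have hn' : n = m + ((n - m).toNat : ℤ) := by
        rw [Int.toNat_of_nonneg (by omega)]; omega
      calc (σ ^ n) w = (σ ^ (m + (((n - m).toNat : ℕ) : ℤ))) w := by rw [← hn']
        _ = (σ ^ m) ((σ ^ (((n - m).toNat : ℕ) : ℤ)) w) := by rw [zpow_add]; rfl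
        _ ≤ (σ ^ m) w := hpow _ _ _ (hj _)
  have key : ∀ m n : ℤ, ∃ k : ℤ, (σ ^ m) w ≤ (σ ^ k) w ∧ (σ ^ n) w ≤ (σ ^ k) w := by
    intro m n
    rcases hmon with h | h
    · exact ⟨max m n, h m _ (le_max_left _ _), h n _ (le_max_right _ _)⟩
    · exact ⟨min m n, h _ m (min_le_left _ _), h _ n (min_le_right _ _)⟩
  -- the downward closure of the orbit of w
  set D : Set M := {z | ∃ n : ℤ, z ≤ (σ ^ n) w} with hD
  have hDS : D ∈ S := by
    refine ⟨?_, ?_, ?_⟩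
    · rintro z ⟨m, hzm⟩ z' ⟨n, hzn⟩ hne
      obtain ⟨k, hk1, hk2⟩ := key m n
      exact htree ((σ ^ k) w) (le_trans hzm hk1) (le_trans hzn hk2) hne
    · rintro x ⟨n, hxn⟩ z hz
      exact ⟨n, le_trans hz hxn⟩
    · ext x
      constructor
      · rintro ⟨z, ⟨n, hzn⟩, rfl⟩
        refine ⟨n + 1, ?_⟩
        have he : σ ^ (n + 1) = σ * σ ^ n := by
          rw [show n + 1 = 1 + n by ring, zpow_add, zpow_one]
        rw [he]
        exact hσ _ _ hzn
      · rintro ⟨n, hxn⟩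
        refine ⟨σ⁻¹ x, ⟨n - 1, ?_⟩, Equiv.apply_symm_apply σ x⟩
        have he : σ ^ (n - 1) = σ⁻¹ * σ ^ n := by
          rw [show n - 1 = -1 + n by ring, zpow_add, zpow_neg_one]
        rw [he]
        exact hσ' _ _ hxn
  have hCD : C ⊆ D := by
    intro c hc
    exact ⟨0, by simpa using hcw c hc⟩
  have hwD : w ∈ D := ⟨0, by simp⟩
  exact hwC (hC.2 hDS hCD hwD)
end

section
/- Let M be a meet-tree and σ an automorphism of M. If B ⊆ M is a chain with σ(B) = B, x ∈ B, and y < x, then B ∪ {σ^n(y) : n ∈ ℤ} is still a chain. -/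
/-- In a meet-tree, if `B` is a chain invariant under an automorphism `σ`, `x ∈ B` and
`y < x`, then adding the whole `σ`-orbit of `y` to `B` still yields a chain. -/
theorem stmt_7 {M : Type*} [SemilatticeInf M]
    (htree : ∀ a : M, IsChain (· ≤ ·) {x : M | x ≤ a})
    (σ : Equiv.Perm M) (hmono : ∀ a b : M, a ≤ b ↔ σ a ≤ σ b)
    (hinf : ∀ a b : M, σ (a ⊓ b) = σ a ⊓ σ b)
    (B : Set M) (hB : IsChain (· ≤ ·) B) (hBinv : σ '' B = B)
    (x : M) (hx : x ∈ B) (y : M) (hy : y < x) :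
    IsChain (· ≤ ·) (B ∪ {z : M | ∃ n : ℤ, (σ ^ n) y = z}) := by
  -- σ⁻¹ also preserves order
  have hmono' : ∀ a b : M, a ≤ b ↔ σ⁻¹ a ≤ σ⁻¹ b := by
    intro a b
    conv_lhs => rw [← σ.apply_symm_apply a, ← σ.apply_symm_apply b]
    exact (hmono _ _).symm
  -- σ^n preserves order for all n : ℤ
  have hpow : ∀ n : ℤ, ∀ a b : M, a ≤ b ↔ (σ ^ n) a ≤ (σ ^ n) b := by
    intro n
    induction n using Int.induction_on with
    | zero => simp
    | succ k ih =>
      intro a b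
      have : (σ ^ ((k : ℤ) + 1)) = σ ^ (k : ℤ) * σ := zpow_add_one σ k
      rw [this]
      simp only [Equiv.Perm.mul_apply]
      rw [← ih, ← hmono]
    | pred k ih =>
      intro a b
      have : (σ ^ (-(k : ℤ) - 1)) = σ ^ (-(k : ℤ)) * σ⁻¹ := zpow_sub_one σ _
      rw [this]
      simp only [Equiv.Perm.mul_apply]
      rw [← ih, ← hmono']
  -- B invariant under σ and σ⁻¹
  have hBfwd : ∀ b ∈ B, σ b ∈ B := fun b hb => hBinv ▸ Set.mem_image_of_mem σ hb
  have hBbwd : ∀ b ∈ B, σ⁻¹ b ∈ B := by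
    intro b hb
    rw [← hBinv] at hb
    obtain ⟨c, hc, rfl⟩ := hb
    simpa using hc
  have hBpow : ∀ n : ℤ, ∀ b ∈ B, (σ ^ n) b ∈ B := by
    intro n
    induction n using Int.induction_on with
    | zero => simpa using fun b hb => hb
    | succ k ih =>
      intro b hb
      rw [zpow_add_one σ k]
      exact ih _ (hBfwd b hb)
    | pred k ih =>
      intro b hb
      rw [zpow_sub_one σ _]
      exact ih _ (hBbwd b hb)
  -- key: σ^n y < σ^n x ∈ B
  have hyx : ∀ n : ℤ, (σ ^ n) y ≤ (σ ^ n) x := fun n => (hpow n y x).mp hy.le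
  -- comparability of b ∈ B with σ^n y
  have key : ∀ b ∈ B, ∀ n : ℤ, b ≤ (σ ^ n) y ∨ (σ ^ n) y ≤ b := by
    intro b hb n
    rcases eq_or_ne b ((σ ^ n) x) with rfl | hne
    · exact Or.inr (hyx n)
    rcases hB hb (hBpow n x hx) hne with h | h
    · -- b ≤ σ^n x and σ^n y ≤ σ^n x: use htree
      rcases eq_or_ne b ((σ ^ n) y) with rfl | hne2
      · exact Or.inl le_rfl
      exact htree ((σ ^ n) x) h (hyx n) hne2
    · exact Or.inr ((hyx n).trans h)
  intro a ha b hb hab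
  rcases ha with ha | ⟨m, rfl⟩ <;> rcases hb with hb | ⟨n, rfl⟩
  · exact hB ha hb hab
  · exact key a ha n
  · exact (key b hb m).symm
  · -- two orbit elements
    rcases eq_or_ne ((σ ^ m) x) ((σ ^ n) x) with he | hne
    · exact htree ((σ ^ n) x) (he ▸ hyx m) (hyx n) hab
    rcases hB (hBpow m x hx) (hBpow n x hx) hne with h | h
    · exact htree ((σ ^ n) x) ((hyx m).trans h) (hyx n) hab
    · exact htree ((σ ^ m) x) (hyx m) ((hyx n).trans h) hab
end

section
/- Let M be a meet-tree and σ an automorphism of M. If B ⊆ M is a σ-invariant chain that is downward closed and has no maximum, and a ∈ M satisfies a ≥ B (a is an upper bound of B) and σ(a) is comparable with a, then B ∪ {σ^n(a) : n ∈ ℤ} is a chain. -/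
/-- In a meet-tree, if `B` is a σ-invariant downward-closed chain with no maximum and `a`
is an upper bound of `B` comparable with `σ a`, then `B` together with the σ-orbit of
`a` is a chain. -/
theorem stmt_8 {M : Type*} [SemilatticeInf M]
    (htree : ∀ a : M, IsChain (· ≤ ·) {x : M | x ≤ a})
    (σ : Equiv.Perm M) (hmono : ∀ a b : M, a ≤ b ↔ σ a ≤ σ b)
    (hinf : ∀ a b : M, σ (a ⊓ b) = σ a ⊓ σ b)
    (B : Set M) (hB : IsChain (· ≤ ·) B) (hBinv : σ '' B = B)
    (hdc : ∀ x ∈ B, ∀ y : M, y ≤ x → y ∈ B)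
    (hnomax : ∀ x ∈ B, ∃ y ∈ B, x < y)
    (a : M) (ha : ∀ b ∈ B, b ≤ a) (hcomp : σ a ≤ a ∨ a ≤ σ a) :
    IsChain (· ≤ ·) (B ∪ {z : M | ∃ n : ℤ, (σ ^ n) a = z}) := by
  -- monotonicity of σ^n for all integer n
  have mono : ∀ n : ℤ, ∀ x y : M, x ≤ y ↔ (σ ^ n) x ≤ (σ ^ n) y := by
    intro n
    induction n using Int.induction_on with
    | zero => simp
    | succ k ih =>
      intro x y
      rw [zpow_add_one]
      simp only [Equiv.Perm.mul_apply]
      exact (hmono x y).trans (ih (σ x) (σ y))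
    | pred k ih =>
      intro x y
      rw [zpow_sub_one]
      simp only [Equiv.Perm.mul_apply]
      have h : x ≤ y ↔ σ⁻¹ x ≤ σ⁻¹ y := by
        constructor
        · intro h
          have := (hmono (σ⁻¹ x) (σ⁻¹ y)).mpr
          simp only [Equiv.Perm.coe_inv, Equiv.apply_symm_apply] at this
          exact this h
        · intro h
          have := (hmono (σ⁻¹ x) (σ⁻¹ y)).mp h
          simpa using this
      exact h.trans (ih (σ⁻¹ x) (σ⁻¹ y))
  -- B is invariant under σ^n for all n
  have hσB : ∀ b ∈ B, σ b ∈ B := by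
    intro b hb
    have : σ b ∈ σ '' B := Set.mem_image_of_mem σ hb
    rwa [hBinv] at this
  have hσ'B : ∀ b ∈ B, σ⁻¹ b ∈ B := by
    intro b hb
    rw [← hBinv] at hb
    obtain ⟨c, hc, rfl⟩ := hb
    simpa using hc
  have hBn : ∀ n : ℤ, ∀ b ∈ B, (σ ^ n) b ∈ B := by
    intro n
    induction n using Int.induction_on with
    | zero => simpa using fun b hb => hb
    | succ k ih =>
      intro b hb
      rw [zpow_add_one]
      simp only [Equiv.Perm.mul_apply]
      exact ih (σ b) (hσB b hb)
    | pred k ih =>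
      intro b hb
      rw [zpow_sub_one]
      simp only [Equiv.Perm.mul_apply]
      exact ih (σ⁻¹ b) (hσ'B b hb)
  -- every σ^n a is an upper bound of B
  have ha' : ∀ n : ℤ, ∀ b ∈ B, b ≤ (σ ^ n) a := by
    intro n b hb
    have h1 : (σ ^ (-n)) b ∈ B := hBn (-n) b hb
    have h2 := (mono n _ _).mp (ha _ h1)
    rwa [← Equiv.Perm.mul_apply, ← zpow_add, add_neg_cancel, zpow_zero,
      Equiv.Perm.one_apply] at h2
  -- the orbit is a chain
  have orb : ∀ m n : ℤ, m ≤ n → (σ ^ m) a ≤ (σ ^ n) a ∨ (σ ^ n) a ≤ (σ ^ m) a := by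
    intro m n hmn
    have hsplit : (σ ^ n) a = (σ ^ m) ((σ ^ (n - m)) a) := by
      rw [← Equiv.Perm.mul_apply, ← zpow_add]
      ring_nf
    have hstep : ∀ k : ℕ, (σ ^ ((k : ℤ) + 1)) a = (σ ^ (k : ℤ)) (σ a) := by
      intro k
      rw [zpow_add_one]
      simp [Equiv.Perm.mul_apply]
    have hk : (∀ k : ℕ, (σ ^ (k : ℤ)) a ≤ a) ∨ (∀ k : ℕ, a ≤ (σ ^ (k : ℤ)) a) := by
      rcases hcomp with h | h
      · left
        intro k
        induction k with
        | zero => simp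
        | succ k ih =>
          push_cast
          rw [hstep k]
          exact le_trans ((mono (k : ℤ) _ _).mp h) ih
      · right
        intro k
        induction k with
        | zero => simp
        | succ k ih =>
          push_cast
          rw [hstep k]
          exact le_trans ih ((mono (k : ℤ) _ _).mp h)
    have hnm : n - m = ((n - m).toNat : ℤ) := (Int.toNat_of_nonneg (by omega)).symm
    rcases hk with h | h
    · right
      rw [hsplit]
      exact (mono m _ _).mp (by have := h (n - m).toNat; rwa [← hnm] at this)
    · left
      rw [hsplit]
      exact (mono m _ _).mp (by have := h (n - m).toNat; rwa [← hnm] at this)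
  intro x hx y hy _
  rcases hx with hx | ⟨m, rfl⟩
  · rcases hy with hy | ⟨n, rfl⟩
    · exact hB hx hy ‹x ≠ y›
    · exact Or.inl (ha' n x hx)
  · rcases hy with hy | ⟨n, rfl⟩
    · exact Or.inr (ha' m y hy)
    · rcases le_total m n with h | h
      · exact orb m n h
      · exact (orb n m h).symm
end

section
/- On the atomless countable Boolean algebra, define for finite subsets A, B (over the empty base): A ⫫ B iff the subalgebra generated by A ∪ B has atoms in natural bijection with pairs (atom of ⟨A⟩, atom of ⟨B⟩), i.e., every atom a of ⟨A⟩ and atom b of ⟨B⟩ satisfy a ∧ b ≠ 0 and ⟨A⟩ ∩ ⟨B⟩ = {0, 1}. Then if A ⫫ B, A' ⫫ B', and there are isomorphisms f : ⟨A⟩ → ⟨A'⟩, g : ⟨B⟩ → ⟨B'⟩, the map sending each atom a ∧ b of ⟨A ∪ B⟩ (for atoms a ∈ ⟨A⟩, b ∈ ⟨B⟩) to f(a) ∧ g(b) extends to an isomorphism ⟨A ∪ B⟩ → ⟨A' ∪ B'⟩. -/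
/-- `S` is (the underlying set of) a Boolean subalgebra. -/
def IsBoolSub {α : Type*} [BooleanAlgebra α] (S : Set α) : Prop :=
  ⊥ ∈ S ∧ ⊤ ∈ S ∧ (∀ x ∈ S, ∀ y ∈ S, x ⊓ y ∈ S) ∧ (∀ x ∈ S, ∀ y ∈ S, x ⊔ y ∈ S) ∧
    ∀ x ∈ S, xᶜ ∈ S

/-- `a` is an atom of the subalgebra `S`: a minimal nonzero element of `S`. -/
def atomOfSub {α : Type*} [BooleanAlgebra α] (S : Set α) (a : α) : Prop :=
  a ∈ S ∧ a ≠ ⊥ ∧ ∀ x ∈ S, x ≤ a → x = ⊥ ∨ x = a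

/-- `S` is the subalgebra generated by `A ∪ B`. -/
def genBy {α : Type*} [BooleanAlgebra α] (S A B : Set α) : Prop :=
  IsBoolSub S ∧ A ∪ B ⊆ S ∧ ∀ T : Set α, IsBoolSub T → A ∪ B ⊆ T → S ⊆ T

namespace Stmt10Aux

open Finset
open scoped Classical

variable {α : Type*} [BooleanAlgebra α]

/-- join of a finite set of pairs, as meets. -/
def jj (T : Finset (α × α)) : α := T.sup fun p => p.1 ⊓ p.2

lemma exists_atom_le {A : Set α} (hAfin : A.Finite)
    {x : α} (hx : x ∈ A) (hx0 : x ≠ ⊥) : ∃ a, atomOfSub A a ∧ a ≤ x := by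
  have hfin : {z : α | z ∈ A ∧ z ≤ x ∧ z ≠ ⊥}.Finite := hAfin.subset (fun z hz => hz.1)
  obtain ⟨a, ha, hmin⟩ := hfin.exists_minimalFor id _ ⟨x, hx, le_rfl, hx0⟩
  refine ⟨a, ⟨ha.1, ha.2.2, ?_⟩, ha.2.1⟩
  intro w hw hwa
  rcases eq_or_ne w ⊥ with hwb | hwb
  · exact Or.inl hwb
  · exact Or.inr (le_antisymm hwa (hmin ⟨hw, le_trans hwa ha.2.1, hwb⟩ hwa))

lemma sup_mem {A : Set α} (hA : IsBoolSub A) (T : Finset α) (h : ∀ x ∈ T, x ∈ A) :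
    T.sup id ∈ A := by
  classical
  induction T using Finset.induction_on with
  | empty => simpa using hA.1
  | @insert a T ha ih =>
    rw [Finset.sup_insert]
    exact hA.2.2.2.1 _ (h _ (mem_insert_self _ _)) _
      (ih fun x hx => h _ (mem_insert_of_mem hx))

/-- the finset of atoms of a finite subalgebra. -/
noncomputable def atF {A : Set α} (hAfin : A.Finite) : Finset α :=
  hAfin.toFinset.filter (fun a => atomOfSub A a)

lemma mem_atF {A : Set α} (hAfin : A.Finite) {a : α} :
    a ∈ atF hAfin ↔ atomOfSub A a := by
  classical
  unfold atF
  rw [Finset.mem_filter, Set.Finite.mem_toFinset]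
  exact ⟨fun h => h.2, fun h => ⟨h.1, h⟩⟩

lemma sup_atoms {A : Set α} (hA : IsBoolSub A) (hAfin : A.Finite)
    {x : α} (hx : x ∈ A) [DecidablePred (· ≤ x)] :
    ((atF hAfin).filter (· ≤ x)).sup id = x := by
  set y := ((atF hAfin).filter (· ≤ x)).sup id with hy
  have hyA : y ∈ A := sup_mem hA _ (fun z hz => ((mem_atF hAfin).mp (mem_filter.mp hz).1).1)
  have hyx : y ≤ x := Finset.sup_le (fun z hz => (mem_filter.mp hz).2)
  have hxy : x ≤ y := by
    by_contra hcon
    have hne : x \ y ≠ ⊥ := fun hb => hcon (sdiff_eq_bot_iff.mp hb)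
    have hmem : x \ y ∈ A := by
      rw [sdiff_eq]
      exact hA.2.2.1 _ hx _ (hA.2.2.2.2 _ hyA)
    obtain ⟨a, ha, hale⟩ := exists_atom_le hAfin hmem hne
    have hax : a ≤ x := le_trans hale sdiff_le
    have hay : a ≤ y := Finset.le_sup (f := id) (mem_filter.mpr ⟨(mem_atF hAfin).mpr ha, hax⟩)
    have : a ≤ ⊥ := by
      have h1 : a ≤ y ⊓ yᶜ := le_inf hay (le_trans hale (by rw [sdiff_eq]; exact inf_le_right))
      simpa using h1
    exact ha.2.1 (le_bot_iff.mp this)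
  exact le_antisymm hyx hxy

/-- the finset of atom pairs. -/
noncomputable def KF {A B : Set α} (hAfin : A.Finite) (hBfin : B.Finite) : Finset (α × α) :=
  atF hAfin ×ˢ atF hBfin

lemma mem_KF {A B : Set α} (hAfin : A.Finite) (hBfin : B.Finite) {p : α × α} :
    p ∈ KF hAfin hBfin ↔ atomOfSub A p.1 ∧ atomOfSub B p.2 := by
  simp [KF, Finset.mem_product, mem_atF]

lemma atom_inf_bot {A : Set α} (hA : IsBoolSub A) {a a' : α}
    (ha : atomOfSub A a) (ha' : atomOfSub A a') (hne : a ≠ a') : a ⊓ a' = ⊥ := by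
  have hm : a ⊓ a' ∈ A := hA.2.2.1 _ ha.1 _ ha'.1
  rcases ha.2.2 _ hm inf_le_left with h | h
  · exact h
  · rcases ha'.2.2 _ hm inf_le_right with h' | h'
    · exact h'
    · exact absurd (h.symm.trans h') hne

lemma pair_inf_bot {A B : Set α} (hA : IsBoolSub A) (hB : IsBoolSub B)
    (hAfin : A.Finite) (hBfin : B.Finite) {p q : α × α}
    (hp : p ∈ KF hAfin hBfin) (hq : q ∈ KF hAfin hBfin) (hne : p ≠ q) :
    (p.1 ⊓ p.2) ⊓ (q.1 ⊓ q.2) = ⊥ := by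
  rw [mem_KF] at hp hq
  rcases eq_or_ne p.1 q.1 with h1 | h1
  · have h2 : p.2 ≠ q.2 := fun h2 => hne (Prod.ext h1 h2)
    have : (p.1 ⊓ p.2) ⊓ (q.1 ⊓ q.2) ≤ p.2 ⊓ q.2 :=
      le_inf (le_trans inf_le_left inf_le_right) (le_trans inf_le_right inf_le_right)
    rw [atom_inf_bot hB hp.2 hq.2 h2] at this
    exact le_bot_iff.mp this
  · have : (p.1 ⊓ p.2) ⊓ (q.1 ⊓ q.2) ≤ p.1 ⊓ q.1 :=
      le_inf (le_trans inf_le_left inf_le_left) (le_trans inf_le_right inf_le_left)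
    rw [atom_inf_bot hA hp.1 hq.1 h1] at this
    exact le_bot_iff.mp this

lemma jj_inf {A B : Set α} (hA : IsBoolSub A) (hB : IsBoolSub B)
    (hAfin : A.Finite) (hBfin : B.Finite) {T T' : Finset (α × α)}
    (hT : T ⊆ KF hAfin hBfin) (hT' : T' ⊆ KF hAfin hBfin) [DecidableEq (α × α)] :
    jj T ⊓ jj T' = jj (T ∩ T') := by
  simp only [jj]
  apply le_antisymm
  · rw [Finset.sup_inf_distrib_right]
    apply Finset.sup_le
    intro p hp
    rw [Finset.sup_inf_distrib_left]
    apply Finset.sup_le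
    intro q hq
    rcases eq_or_ne p q with rfl | hne
    · rw [inf_idem]
      exact Finset.le_sup (f := fun p : α × α => p.1 ⊓ p.2) (Finset.mem_inter.mpr ⟨hp, hq⟩)
    · rw [pair_inf_bot hA hB hAfin hBfin (hT hp) (hT' hq) hne]
      exact bot_le
  · exact le_inf (Finset.sup_mono Finset.inter_subset_left)
      (Finset.sup_mono Finset.inter_subset_right)

lemma mem_of_le_jj {A B : Set α} (hA : IsBoolSub A) (hB : IsBoolSub B)
    (hAfin : A.Finite) (hBfin : B.Finite)
    (hind : ∀ a b : α, atomOfSub A a → atomOfSub B b → a ⊓ b ≠ ⊥)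
    {p : α × α} (hp : p ∈ KF hAfin hBfin) {T : Finset (α × α)}
    (hT : T ⊆ KF hAfin hBfin) (h : p.1 ⊓ p.2 ≤ jj T) : p ∈ T := by
  classical
  by_contra hcon
  have hs : ({p} : Finset (α × α)) ⊆ KF hAfin hBfin := Finset.singleton_subset_iff.mpr hp
  have h1 : jj ({p} : Finset (α × α)) ⊓ jj T = jj ({p} ∩ T) := jj_inf hA hB hAfin hBfin hs hT
  have h2 : jj ({p} : Finset (α × α)) = p.1 ⊓ p.2 := Finset.sup_singleton
  have h3 : ({p} : Finset (α × α)) ∩ T = ∅ := Finset.singleton_inter_of_notMem hcon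
  rw [h2, inf_eq_left.mpr h, h3] at h1
  have := (mem_KF hAfin hBfin).mp hp
  exact hind _ _ this.1 this.2 (h1.trans Finset.sup_empty)

lemma jj_le_iff {A B : Set α} (hA : IsBoolSub A) (hB : IsBoolSub B)
    (hAfin : A.Finite) (hBfin : B.Finite)
    (hind : ∀ a b : α, atomOfSub A a → atomOfSub B b → a ⊓ b ≠ ⊥)
    {T T' : Finset (α × α)} (hT : T ⊆ KF hAfin hBfin) (hT' : T' ⊆ KF hAfin hBfin) :
    jj T ≤ jj T' ↔ T ⊆ T' := by
  constructor
  · intro h p hp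
    have h1 : p.1 ⊓ p.2 ≤ jj T := Finset.le_sup (f := fun p : α × α => p.1 ⊓ p.2) hp
    exact mem_of_le_jj hA hB hAfin hBfin hind (hT hp) hT' (le_trans h1 h)
  · exact Finset.sup_mono

lemma jj_KF_top {A B : Set α} (hA : IsBoolSub A) (hB : IsBoolSub B)
    (hAfin : A.Finite) (hBfin : B.Finite) :
    jj (KF hAfin hBfin) = ⊤ := by
  classical
  have hB_top : (atF hBfin).sup id = ⊤ := by
    have := sup_atoms hB hBfin hB.2.1 (x := ⊤)
    rwa [Finset.filter_true_of_mem (fun _ _ => le_top)] at this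
  have hA_top : (atF hAfin).sup id = ⊤ := by
    have := sup_atoms hA hAfin hA.2.1 (x := ⊤)
    rwa [Finset.filter_true_of_mem (fun _ _ => le_top)] at this
  rw [jj, KF, Finset.sup_product_left]
  show (atF hAfin).sup (fun a => (atF hBfin).sup fun b => a ⊓ b) = ⊤
  have step : ∀ a : α, (atF hBfin).sup (fun b => a ⊓ b) = id a := by
    intro a
    have := (Finset.sup_inf_distrib_left (atF hBfin) id a).symm
    rw [hB_top, inf_top_eq] at this
    exact this
  rw [Finset.sup_congr rfl (fun a _ => step a)]
  exact hA_top

/-- the canonical description of the generated subalgebra. -/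
def PP {A B : Set α} (hAfin : A.Finite) (hBfin : B.Finite) : Set α :=
  {x : α | ∃ T : Finset (α × α), T ⊆ KF hAfin hBfin ∧ x = jj T}

lemma genBy_PP {A B : Set α} (hA : IsBoolSub A) (hB : IsBoolSub B)
    (hAfin : A.Finite) (hBfin : B.Finite) :
    genBy (PP hAfin hBfin) A B := by
  classical
  refine ⟨⟨⟨∅, Finset.empty_subset _, Finset.sup_empty.symm⟩,
    ⟨KF hAfin hBfin, subset_rfl, (jj_KF_top hA hB hAfin hBfin).symm⟩, ?_, ?_, ?_⟩, ?_, ?_⟩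
  · rintro x ⟨T, hT, rfl⟩ y ⟨T', hT', rfl⟩
    exact ⟨T ∩ T', fun p hp => hT (Finset.mem_inter.mp hp).1,
      jj_inf hA hB hAfin hBfin hT hT'⟩
  · rintro x ⟨T, hT, rfl⟩ y ⟨T', hT', rfl⟩
    exact ⟨T ∪ T', Finset.union_subset hT hT', (Finset.sup_union).symm⟩
  · rintro x ⟨T, hT, rfl⟩
    refine ⟨KF hAfin hBfin \ T, Finset.sdiff_subset, ?_⟩
    apply compl_unique
    · rw [jj_inf hA hB hAfin hBfin hT Finset.sdiff_subset]
      rw [Finset.inter_sdiff_self, jj, Finset.sup_empty]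
    · rw [jj, jj, ← Finset.sup_union, Finset.union_sdiff_of_subset hT]
      exact jj_KF_top hA hB hAfin hBfin
  · rintro x (hx | hx)
    · refine ⟨(atF hAfin).filter (· ≤ x) ×ˢ atF hBfin,
        Finset.product_subset_product (Finset.filter_subset _ _) subset_rfl, ?_⟩
      rw [jj, Finset.sup_product_left]
      show x = ((atF hAfin).filter (· ≤ x)).sup fun a => (atF hBfin).sup fun b => a ⊓ b
      have hB_top : (atF hBfin).sup id = ⊤ := by
        have := sup_atoms hB hBfin hB.2.1 (x := ⊤)
        rwa [Finset.filter_true_of_mem (fun _ _ => le_top)] at this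
      have step : ∀ a : α, (atF hBfin).sup (fun b => a ⊓ b) = id a := by
        intro a
        have := (Finset.sup_inf_distrib_left (atF hBfin) id a).symm
        rw [hB_top, inf_top_eq] at this
        exact this
      rw [Finset.sup_congr rfl (fun a _ => step a)]
      exact (sup_atoms hA hAfin hx).symm
    · refine ⟨atF hAfin ×ˢ (atF hBfin).filter (· ≤ x),
        Finset.product_subset_product subset_rfl (Finset.filter_subset _ _), ?_⟩
      rw [jj, Finset.sup_product_left]
      show x = (atF hAfin).sup fun a => ((atF hBfin).filter (· ≤ x)).sup fun b => a ⊓ b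
      have hA_top : (atF hAfin).sup id = ⊤ := by
        have := sup_atoms hA hAfin hA.2.1 (x := ⊤)
        rwa [Finset.filter_true_of_mem (fun _ _ => le_top)] at this
      have hxsup : ((atF hBfin).filter (· ≤ x)).sup id = x := sup_atoms hB hBfin hx
      have step : ∀ a : α, ((atF hBfin).filter (· ≤ x)).sup (fun b => a ⊓ b) = a ⊓ x := by
        intro a
        have := (Finset.sup_inf_distrib_left ((atF hBfin).filter (· ≤ x)) id a).symm
        rw [hxsup] at this
        exact this
      rw [Finset.sup_congr rfl (fun a _ => step a)]
      have h2 := Finset.sup_inf_distrib_right (atF hAfin) id x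
      rw [hA_top, top_inf_eq] at h2
      simpa using h2
  · rintro T hT hsub x ⟨U, hU, rfl⟩
    induction U using Finset.induction_on with
    | empty => simpa [jj] using hT.1
    | @insert p U hp ih =>
      rw [jj, Finset.sup_insert]
      have hpK := (mem_KF hAfin hBfin).mp (hU (Finset.mem_insert_self _ _))
      have h1 : p.1 ∈ T := hsub (Or.inl hpK.1.1)
      have h2 : p.2 ∈ T := hsub (Or.inr hpK.2.1)
      exact hT.2.2.2.1 _ (hT.2.2.1 _ h1 _ h2) _
        (ih fun q hq => hU (Finset.mem_insert_of_mem hq))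

lemma genBy_eq_PP {A B S : Set α} (hA : IsBoolSub A) (hB : IsBoolSub B)
    (hAfin : A.Finite) (hBfin : B.Finite) (hS : genBy S A B) :
    S = PP hAfin hBfin := by
  have h1 := genBy_PP hA hB hAfin hBfin
  exact Set.Subset.antisymm (hS.2.2 _ h1.1 h1.2.1) (h1.2.2 _ hS.1 hS.2.1)

noncomputable def Tof {A B : Set α} (hAfin : A.Finite) (hBfin : B.Finite) (s : α) :
    Finset (α × α) :=
  (KF hAfin hBfin).filter (fun p => p.1 ⊓ p.2 ≤ s)

lemma Tof_subset {A B : Set α} (hAfin : A.Finite) (hBfin : B.Finite) (s : α) :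
    Tof hAfin hBfin s ⊆ KF hAfin hBfin := Finset.filter_subset _ _

lemma Tof_jj {A B : Set α} (hA : IsBoolSub A) (hB : IsBoolSub B)
    (hAfin : A.Finite) (hBfin : B.Finite)
    (hind : ∀ a b : α, atomOfSub A a → atomOfSub B b → a ⊓ b ≠ ⊥)
    {T : Finset (α × α)} (hT : T ⊆ KF hAfin hBfin) :
    Tof hAfin hBfin (jj T) = T := by
  classical
  ext p
  simp only [Tof, Finset.mem_filter]
  constructor
  · rintro ⟨hp, hle⟩
    exact mem_of_le_jj hA hB hAfin hBfin hind hp hT hle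
  · intro hp
    exact ⟨hT hp, Finset.le_sup (f := fun p : α × α => p.1 ⊓ p.2) hp⟩

lemma jj_Tof {A B : Set α} (hA : IsBoolSub A) (hB : IsBoolSub B)
    (hAfin : A.Finite) (hBfin : B.Finite)
    (hind : ∀ a b : α, atomOfSub A a → atomOfSub B b → a ⊓ b ≠ ⊥)
    {s : α} (hs : s ∈ PP hAfin hBfin) :
    jj (Tof hAfin hBfin s) = s := by
  obtain ⟨T, hT, rfl⟩ := hs
  rw [Tof_jj hA hB hAfin hBfin hind hT]

lemma Tof_mono {A B : Set α} (hAfin : A.Finite) (hBfin : B.Finite)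
    {s t : α} (h : s ≤ t) : Tof hAfin hBfin s ⊆ Tof hAfin hBfin t := by
  classical
  intro p hp
  simp only [Tof, Finset.mem_filter] at hp ⊢
  exact ⟨hp.1, le_trans hp.2 h⟩

lemma map_bot_sub {A A' : Set α} (hA : IsBoolSub A) (hA' : IsBoolSub A')
    (f : A ≃o A') : (f ⟨⊥, hA.1⟩ : α) = ⊥ := by
  have h1 : (⟨⊥, hA.1⟩ : A) ≤ f.symm ⟨⊥, hA'.1⟩ :=
    Subtype.coe_le_coe.mp bot_le
  have h2 : f ⟨⊥, hA.1⟩ ≤ (⟨⊥, hA'.1⟩ : A') := by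
    have := f.le_iff_le.mpr h1
    rwa [f.apply_symm_apply] at this
  exact le_bot_iff.mp (Subtype.coe_le_coe.mpr h2)

lemma map_atom_sub {A A' : Set α} (hA : IsBoolSub A) (hA' : IsBoolSub A')
    (f : A ≃o A') {a : α} (ha : atomOfSub A a) :
    atomOfSub A' (f ⟨a, ha.1⟩ : α) := by
  refine ⟨(f ⟨a, ha.1⟩).2, ?_, ?_⟩
  · intro hbot
    have : f ⟨a, ha.1⟩ = f ⟨⊥, hA.1⟩ := by
      apply Subtype.ext
      rw [hbot, map_bot_sub hA hA' f]
    have := f.injective this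
    exact ha.2.1 (congrArg Subtype.val this)
  · intro x hx hle
    set y := f.symm ⟨x, hx⟩ with hy
    have hyle : y ≤ (⟨a, ha.1⟩ : A) := by
      rw [hy, ← f.symm_apply_apply ⟨a, ha.1⟩]
      exact f.symm.le_iff_le.mpr (Subtype.coe_le_coe.mp hle)
    have hxy : x = (f y : α) := by rw [hy, f.apply_symm_apply]
    rcases ha.2.2 (y : α) y.2 (Subtype.coe_le_coe.mpr hyle) with h | h
    · left
      have : y = (⟨⊥, hA.1⟩ : A) := Subtype.ext h
      rw [hxy, this, map_bot_sub hA hA' f]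
    · right
      have : y = (⟨a, ha.1⟩ : A) := Subtype.ext h
      rw [hxy, this]

end Stmt10Aux
namespace Stmt10Aux

open Finset
open scoped Classical

variable {α : Type*} [BooleanAlgebra α]

noncomputable def Fmap {A B A' B' : Set α} (f : A ≃o A') (g : B ≃o B') :
    α × α → α × α := fun p =>
  (if h : p.1 ∈ A then ((f ⟨p.1, h⟩ : A') : α) else ⊥,
   if h : p.2 ∈ B then ((g ⟨p.2, h⟩ : B') : α) else ⊥)

lemma Fmap_eval {A B A' B' : Set α} (f : A ≃o A') (g : B ≃o B')
    {p : α × α} (h1 : p.1 ∈ A) (h2 : p.2 ∈ B) :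
    Fmap f g p = (((f ⟨p.1, h1⟩ : A') : α), ((g ⟨p.2, h2⟩ : B') : α)) := by
  simp only [Fmap]
  rw [dif_pos h1, dif_pos h2]

lemma Fmap_mem {A B A' B' : Set α} (hA : IsBoolSub A) (hB : IsBoolSub B)
    (hA' : IsBoolSub A') (hB' : IsBoolSub B')
    (hAfin : A.Finite) (hBfin : B.Finite) (hA'fin : A'.Finite) (hB'fin : B'.Finite)
    (f : A ≃o A') (g : B ≃o B') {p : α × α} (hp : p ∈ KF hAfin hBfin) :
    Fmap f g p ∈ KF hA'fin hB'fin := by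
  obtain ⟨ha, hb⟩ := (mem_KF hAfin hBfin).mp hp
  rw [Fmap_eval f g ha.1 hb.1]
  exact (mem_KF hA'fin hB'fin).mpr ⟨map_atom_sub hA hA' f ha, map_atom_sub hB hB' g hb⟩

lemma GF_id {A B A' B' : Set α} (hAfin : A.Finite) (hBfin : B.Finite)
    (f : A ≃o A') (g : B ≃o B') {p : α × α} (hp : p ∈ KF hAfin hBfin) :
    Fmap f.symm g.symm (Fmap f g p) = p := by
  obtain ⟨ha, hb⟩ := (mem_KF hAfin hBfin).mp hp
  rw [Fmap_eval f g ha.1 hb.1,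
    Fmap_eval f.symm g.symm (f ⟨p.1, ha.1⟩).2 (g ⟨p.2, hb.1⟩).2]
  simp

noncomputable def mapPP {A B A' B' : Set α} (hA : IsBoolSub A) (hB : IsBoolSub B)
    (hA' : IsBoolSub A') (hB' : IsBoolSub B')
    (hAfin : A.Finite) (hBfin : B.Finite) (hA'fin : A'.Finite) (hB'fin : B'.Finite)
    (f : A ≃o A') (g : B ≃o B') (s : PP hAfin hBfin) : PP hA'fin hB'fin :=
  ⟨jj ((Tof hAfin hBfin (s : α)).image (Fmap f g)), by
    classical
    refine ⟨(Tof hAfin hBfin (s : α)).image (Fmap f g), ?_, rfl⟩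
    intro q hq
    obtain ⟨p, hp, rfl⟩ := Finset.mem_image.mp hq
    exact Fmap_mem hA hB hA' hB' hAfin hBfin hA'fin hB'fin f g
      (Tof_subset hAfin hBfin _ hp)⟩

lemma mapPP_mono {A B A' B' : Set α} (hA : IsBoolSub A) (hB : IsBoolSub B)
    (hA' : IsBoolSub A') (hB' : IsBoolSub B')
    (hAfin : A.Finite) (hBfin : B.Finite) (hA'fin : A'.Finite) (hB'fin : B'.Finite)
    (f : A ≃o A') (g : B ≃o B') {s t : PP hAfin hBfin} (h : s ≤ t) :
    mapPP hA hB hA' hB' hAfin hBfin hA'fin hB'fin f g s ≤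
      mapPP hA hB hA' hB' hAfin hBfin hA'fin hB'fin f g t := by
  have h' : (s : α) ≤ (t : α) := h
  exact Finset.sup_mono (Finset.image_subset_image (Tof_mono hAfin hBfin h'))

lemma mapPP_left_inv {A B A' B' : Set α} (hA : IsBoolSub A) (hB : IsBoolSub B)
    (hA' : IsBoolSub A') (hB' : IsBoolSub B')
    (hAfin : A.Finite) (hBfin : B.Finite) (hA'fin : A'.Finite) (hB'fin : B'.Finite)
    (hind : ∀ a b : α, atomOfSub A a → atomOfSub B b → a ⊓ b ≠ ⊥)
    (hind' : ∀ a b : α, atomOfSub A' a → atomOfSub B' b → a ⊓ b ≠ ⊥)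
    (f : A ≃o A') (g : B ≃o B') (s : PP hAfin hBfin) :
    mapPP hA' hB' hA hB hA'fin hB'fin hAfin hBfin f.symm g.symm
      (mapPP hA hB hA' hB' hAfin hBfin hA'fin hB'fin f g s) = s := by
  classical
  apply Subtype.ext
  show jj ((Tof hA'fin hB'fin (jj ((Tof hAfin hBfin (s : α)).image (Fmap f g)))).image
    (Fmap f.symm g.symm)) = (s : α)
  have hU : (Tof hAfin hBfin (s : α)).image (Fmap f g) ⊆ KF hA'fin hB'fin := by
    intro q hq
    obtain ⟨p, hp, rfl⟩ := Finset.mem_image.mp hq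
    exact Fmap_mem hA hB hA' hB' hAfin hBfin hA'fin hB'fin f g
      (Tof_subset hAfin hBfin _ hp)
  rw [Tof_jj hA' hB' hA'fin hB'fin hind' hU, Finset.image_image]
  have himg : (Tof hAfin hBfin (s : α)).image (Fmap f.symm g.symm ∘ Fmap f g) =
      Tof hAfin hBfin (s : α) := by
    rw [Finset.image_congr (g := id), Finset.image_id]
    intro p hp
    exact GF_id hAfin hBfin f g (Tof_subset hAfin hBfin _ hp)
  rw [himg]
  exact jj_Tof hA hB hAfin hBfin hind s.2

theorem pp_iso {A B A' B' : Set α} (hA : IsBoolSub A) (hB : IsBoolSub B)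
    (hA' : IsBoolSub A') (hB' : IsBoolSub B')
    (hAfin : A.Finite) (hBfin : B.Finite) (hA'fin : A'.Finite) (hB'fin : B'.Finite)
    (hind : ∀ a b : α, atomOfSub A a → atomOfSub B b → a ⊓ b ≠ ⊥)
    (hind' : ∀ a b : α, atomOfSub A' a → atomOfSub B' b → a ⊓ b ≠ ⊥)
    (f : A ≃o A') (g : B ≃o B') :
    ∃ h : PP hAfin hBfin ≃o PP hA'fin hB'fin,
      ∀ (a b : α) (ha : atomOfSub A a) (hb : atomOfSub B b) (x : PP hAfin hBfin),
        (x : α) = a ⊓ b → (h x : α) = (f ⟨a, ha.1⟩ : α) ⊓ (g ⟨b, hb.1⟩ : α) := by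
  classical
  set F := mapPP hA hB hA' hB' hAfin hBfin hA'fin hB'fin f g with hF
  set G := mapPP hA' hB' hA hB hA'fin hB'fin hAfin hBfin f.symm g.symm with hG
  have hli : Function.LeftInverse G F :=
    mapPP_left_inv hA hB hA' hB' hAfin hBfin hA'fin hB'fin hind hind' f g
  have hri : Function.RightInverse G F := by
    intro s
    have := mapPP_left_inv hA' hB' hA hB hA'fin hB'fin hAfin hBfin hind' hind
      f.symm g.symm s
    simpa [← hF, ← hG] using this
  refine ⟨{ toFun := F, invFun := G, left_inv := hli, right_inv := hri,
            map_rel_iff' := ?_ }, ?_⟩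
  · intro u v
    constructor
    · intro hle
      have hle' : F u ≤ F v := hle
      have h2 := mapPP_mono hA' hB' hA hB hA'fin hB'fin hAfin hBfin f.symm g.symm hle'
      rw [← hG] at h2
      rw [hli u, hli v] at h2
      exact h2
    · exact mapPP_mono hA hB hA' hB' hAfin hBfin hA'fin hB'fin f g
  · intro a b ha hb x hx
    show (F x : α) = _
    have hTof : Tof hAfin hBfin (x : α) = {(a, b)} := by
      ext p
      simp only [Tof, Finset.mem_filter, Finset.mem_singleton, hx]
      constructor
      · rintro ⟨hpK, hle⟩
        obtain ⟨hp1, hp2⟩ := (mem_KF hAfin hBfin).mp hpK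
        have h1 : p.1 = a := by
          by_contra hne
          have hb1 : p.1 ⊓ p.2 ≤ p.1 ⊓ a :=
            le_inf inf_le_left (le_trans hle inf_le_left)
          rw [atom_inf_bot hA hp1 ha hne] at hb1
          exact hind _ _ hp1 hp2 (le_bot_iff.mp hb1)
        have h2 : p.2 = b := by
          by_contra hne
          have hb2 : p.1 ⊓ p.2 ≤ p.2 ⊓ b :=
            le_inf inf_le_right (le_trans hle inf_le_right)
          rw [atom_inf_bot hB hp2 hb hne] at hb2
          exact hind _ _ hp1 hp2 (le_bot_iff.mp hb2)
        exact Prod.ext h1 h2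
      · rintro rfl
        exact ⟨(mem_KF hAfin hBfin).mpr ⟨ha, hb⟩, le_rfl⟩
    show jj ((Tof hAfin hBfin (x : α)).image (Fmap f g)) = _
    rw [hTof, Finset.image_singleton, jj, Finset.sup_singleton,
      Fmap_eval f g ha.1 hb.1]

end Stmt10Aux

/-- Stationarity for the independence relation on the atomless Boolean algebra:
if `A ⫫ B`, `A' ⫫ B'`, and `f, g` are isomorphisms `⟨A⟩ → ⟨A'⟩`, `⟨B⟩ → ⟨B'⟩`,
then the map sending an atom `a ⊓ b` of `⟨A ∪ B⟩` to `f a ⊓ g b` extends to an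
isomorphism `⟨A ∪ B⟩ → ⟨A' ∪ B'⟩`.  Here the subalgebras generated by finite sets
are represented as finite subalgebra-sets, and isomorphisms as order isomorphisms. -/
theorem stmt_10 {α : Type*} [BooleanAlgebra α]
    (hatomless : ∀ a : α, ¬ IsAtom a)
    (A B A' B' : Set α)
    (hA : IsBoolSub A) (hB : IsBoolSub B) (hA' : IsBoolSub A') (hB' : IsBoolSub B')
    (hAfin : A.Finite) (hBfin : B.Finite) (hA'fin : A'.Finite) (hB'fin : B'.Finite)
    (hABtriv : ∀ x : α, x ∈ A → x ∈ B → x = ⊥ ∨ x = ⊤)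
    (hA'B'triv : ∀ x : α, x ∈ A' → x ∈ B' → x = ⊥ ∨ x = ⊤)
    (hind : ∀ a b : α, atomOfSub A a → atomOfSub B b → a ⊓ b ≠ ⊥)
    (hind' : ∀ a b : α, atomOfSub A' a → atomOfSub B' b → a ⊓ b ≠ ⊥)
    (S S' : Set α) (hS : genBy S A B) (hS' : genBy S' A' B')
    (f : A ≃o A') (g : B ≃o B') :
    ∃ h : S ≃o S',
      ∀ (a b : α) (ha : atomOfSub A a) (hb : atomOfSub B b) (x : S),
        (x : α) = a ⊓ b → (h x : α) = (f ⟨a, ha.1⟩ : α) ⊓ (g ⟨b, hb.1⟩ : α) := by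
  classical
  have hSP := Stmt10Aux.genBy_eq_PP hA hB hAfin hBfin hS
  have hSP' := Stmt10Aux.genBy_eq_PP hA' hB' hA'fin hB'fin hS'
  obtain ⟨h0, hprop⟩ := Stmt10Aux.pp_iso hA hB hA' hB' hAfin hBfin hA'fin hB'fin
    hind hind' f g
  refine ⟨(OrderIso.setCongr S _ hSP).trans (h0.trans (OrderIso.setCongr _ S' hSP'.symm)), ?_⟩
  intro a b ha hb x hx
  have : ((OrderIso.setCongr S _ hSP) x : α) = a ⊓ b := hx
  simpa using hprop a b ha hb ((OrderIso.setCongr S _ hSP) x) this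
end

section
/- Let G be a group that cannot be covered by finitely many cosets of proper subgroups without one of the subgroups having finite index (Neumann's lemma): if G = ⋃_{i<n} g_i H_i where each H_i is a subgroup, then some H_i has finite index in G. Consequently, if H_0, …, H_{n-1} are subgroups of G each of infinite index, then G ≠ ⋃_{i<n} H_i, i.e., there exists g ∈ G lying in none of the H_i. -/
open Pointwise

/-- Neumann's lemma: if a group is not coverable by finitely many cosets of subgroups
without one of them having finite index, then finitely many subgroups of infinite index
never cover the group. -/
theorem stmt_11 {G : Type*} [Group G]
    (neumann : ∀ (m : ℕ) (g : Fin m → G) (K : Fin m → Subgroup G),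
      (⋃ i, (g i) • (K i : Set G)) = Set.univ → ∃ i, (K i).FiniteIndex)
    (n : ℕ) (H : Fin n → Subgroup G) (hinf : ∀ i, ¬ (H i).FiniteIndex) :
    ∃ g : G, ∀ i, g ∉ H i := by
  by_contra h
  push_neg at h
  obtain ⟨i, hi⟩ := neumann n (fun _ => 1) H (by
    ext x
    simp only [Set.mem_iUnion, Set.mem_univ, iff_true, one_smul]
    obtain ⟨i, hi⟩ := h x
    exact ⟨i, hi⟩)
  exact hinf i hi
end

section
/- In the random partial order (Fraïssé limit of finite posets), define for finite sets A, B, C: A ⫫_C B iff A ∩ B ⊆ C and for all a ∈ A, b ∈ B, a and b are comparable iff there exists c ∈ C with a ≤ c ≤ b or b ≤ c ≤ a. Then ⫫ satisfies transitivity: if A ⫫_{C ∪ D} B and D ⫫_C B, then A ∪ D ⫫_C B. -/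
/-- The independence relation on finite subsets of a poset. -/
def posetInd {P : Type*} [PartialOrder P] [DecidableEq P] (A C B : Finset P) : Prop :=
  A ∩ B ⊆ C ∧ ∀ a ∈ A, ∀ b ∈ B,
    ((a ≤ b ∨ b ≤ a) ↔ ∃ c ∈ C, (a ≤ c ∧ c ≤ b) ∨ (b ≤ c ∧ c ≤ a))

/-- Transitivity of the independence relation in a partial order. -/
theorem stmt_15 {P : Type*} [PartialOrder P] [DecidableEq P]
    (A B C D : Finset P) (h1 : posetInd A (C ∪ D) B) (h2 : posetInd D C B) :
    posetInd (A ∪ D) C B := by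
  obtain ⟨h1i, h1c⟩ := h1
  obtain ⟨h2i, h2c⟩ := h2
  constructor
  · intro x hx
    simp only [Finset.mem_inter, Finset.mem_union] at hx
    rcases hx.1 with hA | hD
    · have := h1i (Finset.mem_inter.mpr ⟨hA, hx.2⟩)
      rcases Finset.mem_union.mp this with hC | hD
      · exact hC
      · exact h2i (Finset.mem_inter.mpr ⟨hD, hx.2⟩)
    · exact h2i (Finset.mem_inter.mpr ⟨hD, hx.2⟩)
  · intro a ha b hb
    rcases Finset.mem_union.mp ha with hA | hD
    · constructor
      · intro hcomp
        obtain ⟨c, hc, hcase⟩ := (h1c a hA b hb).mp hcomp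
        rcases Finset.mem_union.mp hc with hcC | hcD
        · exact ⟨c, hcC, hcase⟩
        · rcases hcase with ⟨hac, hcb⟩ | ⟨hbc, hca⟩
          · obtain ⟨c', hc', hcase'⟩ := (h2c c hcD b hb).mp (Or.inl hcb)
            rcases hcase' with ⟨h1', h2'⟩ | ⟨h1', h2'⟩
            · exact ⟨c', hc', Or.inl ⟨le_trans hac h1', h2'⟩⟩
            · have : c' = c := le_antisymm h2' (le_trans hcb h1')
              exact ⟨c', hc', Or.inl ⟨hac.trans this.ge, this.le.trans hcb⟩⟩
          · obtain ⟨c', hc', hcase'⟩ := (h2c c hcD b hb).mp (Or.inr hbc)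
            rcases hcase' with ⟨h1', h2'⟩ | ⟨h1', h2'⟩
            · have : c' = c := le_antisymm (h2'.trans hbc) h1'
              exact ⟨c', hc', Or.inr ⟨hbc.trans this.ge, this.le.trans hca⟩⟩
            · exact ⟨c', hc', Or.inr ⟨h1', h2'.trans hca⟩⟩
      · rintro ⟨c, hc, hcase⟩
        exact (h1c a hA b hb).mpr ⟨c, Finset.mem_union_left D hc, hcase⟩
    · exact h2c a hD b hb
end

section
/- Let M be a countable structure and G = Aut(M) with the pointwise convergence topology (a Polish group). If G contains a repulsive automorphism σ, then G has a cyclically dense conjugacy class: there exists τ ∈ G such that {σ^n τ σ^{-n} : n ∈ ℤ} is dense in G; in particular G is topologically 2-generated. -/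
open FirstOrder

/-- Two tuples have the same (complete first-order) type over the empty set. -/
def sameTypeL (L : Language) {M : Type*} [L.Structure M] {α : Type} (x y : α → M) : Prop :=
  ∀ φ : L.Formula α, φ.Realize x ↔ φ.Realize y

/-- `tp(a/b)` does not split over `∅`. -/
def nonSplitL (L : Language) {M : Type*} [L.Structure M] {k l : ℕ}
    (a : Fin k → M) (b : Fin l → M) : Prop :=
  ∀ (m : ℕ) (u v : Fin m → Fin l), sameTypeL L (b ∘ u) (b ∘ v) →
    sameTypeL L (Sum.elim a (b ∘ u)) (Sum.elim a (b ∘ v))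

open Language

namespace T
variable {L : Language} {M : Type*} [L.Structure M]

theorem stl_refl {α : Type} (x : α → M) : sameTypeL L x x := fun _ => Iff.rfl
theorem stl_symm {α : Type} {x y : α → M} (h : sameTypeL L x y) : sameTypeL L y x :=
  fun φ => (h φ).symm
theorem stl_trans {α : Type} {x y z : α → M} (h : sameTypeL L x y) (h' : sameTypeL L y z) :
    sameTypeL L x z := fun φ => (h φ).trans (h' φ)
theorem stl_comp {α β : Type} {x y : α → M} (h : sameTypeL L x y) (u : β → α) :
    sameTypeL L (x ∘ u) (y ∘ u) := fun φ => by
  rw [← Formula.realize_relabel, ← Formula.realize_relabel]; exact h _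
theorem stl_congr {α : Type} {x x' y y' : α → M} (hx : ∀ i, x i = x' i) (hy : ∀ i, y i = y' i)
    (h : sameTypeL L x y) : sameTypeL L x' y' := by
  rw [← funext hx, ← funext hy]; exact h
theorem stl_equiv {α : Type} (τ : M ≃[L] M) (x : α → M) : sameTypeL L x (⇑τ ∘ x) :=
  fun φ => (StrongHomClass.realize_formula τ φ).symm
theorem stl_iter {α : Type} (σ : M ≃[L] M) (n : ℕ) (x : α → M) :
    sameTypeL L x ((⇑σ)^[n] ∘ x) := by
  induction n with
  | zero => exact stl_refl x
  | succ n ih =>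
    refine stl_trans ih (stl_congr (fun _ => rfl) (fun i => ?_) (stl_equiv σ ((⇑σ)^[n] ∘ x)))
    simp [Function.iterate_succ_apply', Function.comp]
theorem stl_eq {α : Type} {x y : α → M} (h : sameTypeL L x y) {i j : α} (hx : x i = x j) :
    y i = y j := by
  have := (h (Term.equal (Term.var i) (Term.var j))).mp
  simpa [Formula.realize_equal] using this (by simpa [Formula.realize_equal] using hx)

structure Cfg (L : Language) (M : Type*) [L.Structure M] where
  k : ℕ
  c : Fin k → M
  d : Fin k → M
  good : sameTypeL L c d

def Cfg.Le (p q : Cfg L M) : Prop :=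
  ∃ h : p.k ≤ q.k, ∀ i : Fin p.k, q.c (Fin.castLE h i) = p.c i ∧ q.d (Fin.castLE h i) = p.d i

theorem Cfg.Le.refl (p : Cfg L M) : p.Le p := ⟨le_rfl, fun i => ⟨rfl, rfl⟩⟩

theorem Cfg.Le.trans {p q r : Cfg L M} (h : p.Le q) (h' : q.Le r) : p.Le r := by
  obtain ⟨h1, hp⟩ := h; obtain ⟨h2, hq⟩ := h'
  refine ⟨h1.trans h2, fun i => ?_⟩
  have := hq (Fin.castLE h1 i)
  have e : Fin.castLE h2 (Fin.castLE h1 i) = Fin.castLE (h1.trans h2) i := rfl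
  rw [e] at this
  exact ⟨this.1.trans (hp i).1, this.2.trans (hp i).2⟩

theorem extend_dom
    (hhom : ∀ (k : ℕ) (x y : Fin k → M), sameTypeL L x y →
      ∃ τ : M ≃[L] M, ∀ i, τ (x i) = y i)
    (p : Cfg L M) (m : M) :
    ∃ q : Cfg L M, p.Le q ∧ ∃ i, q.c i = m := by
  obtain ⟨ρ, hρ⟩ := hhom p.k p.c p.d p.good
  refine ⟨⟨p.k + 1, Fin.snoc p.c m, Fin.snoc p.d (ρ m), ?_⟩, ⟨Nat.le_succ _, fun i => ?_⟩,
    Fin.last _, by simp⟩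
  · refine stl_trans (stl_equiv ρ (Fin.snoc p.c m)) (stl_congr (fun i => ?_) (fun _ => rfl) (stl_refl _))
    refine Fin.lastCases ?_ (fun j => ?_) i <;> simp [hρ]
  · have e : (Fin.castLE (Nat.le_succ p.k) i) = Fin.castSucc i := rfl
    rw [e]; simp

theorem extend_ran
    (hhom : ∀ (k : ℕ) (x y : Fin k → M), sameTypeL L x y →
      ∃ τ : M ≃[L] M, ∀ i, τ (x i) = y i)
    (p : Cfg L M) (m : M) :
    ∃ q : Cfg L M, p.Le q ∧ ∃ i, q.d i = m := by
  obtain ⟨ρ, hρ⟩ := hhom p.k p.d p.c (stl_symm p.good)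
  refine ⟨⟨p.k + 1, Fin.snoc p.c (ρ m), Fin.snoc p.d m, ?_⟩, ⟨Nat.le_succ _, fun i => ?_⟩,
    Fin.last _, by simp⟩
  · refine stl_symm (stl_trans (stl_equiv ρ (Fin.snoc p.d m))
      (stl_congr (fun i => ?_) (fun _ => rfl) (stl_refl _)))
    refine Fin.lastCases ?_ (fun j => ?_) i <;> simp [hρ]
  · have e : (Fin.castLE (Nat.le_succ p.k) i) = Fin.castSucc i := rfl
    rw [e]; simp

theorem handle_req (σ : M ≃[L] M)
    (hrep : ∀ (k : ℕ) (c : Fin k → M), ∃ n : ℕ,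
      nonSplitL L c ((⇑σ)^[n] ∘ c) ∧ nonSplitL L ((⇑σ)^[n] ∘ c) c)
    (p : Cfg L M) {k : ℕ} {a b : Fin k → M} (hab : sameTypeL L a b) :
    ∃ q : Cfg L M, p.Le q ∧ ∃ n : ℕ, ∀ i : Fin k,
      ∃ j, q.c j = (⇑σ)^[n] (a i) ∧ q.d j = (⇑σ)^[n] (b i) := by
  classical
  set K := p.k with hK
  -- big tuple indexing
  let E : (Fin K ⊕ Fin K) ⊕ (Fin k ⊕ Fin k) ≃ Fin ((K + K) + (k + k)) :=
    (Equiv.sumCongr finSumFinEquiv finSumFinEquiv).trans finSumFinEquiv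
  let big : (Fin K ⊕ Fin K) ⊕ (Fin k ⊕ Fin k) → M :=
    Sum.elim (Sum.elim p.c p.d) (Sum.elim a b)
  let e : Fin ((K + K) + (k + k)) → M := big ∘ E.symm
  obtain ⟨n, ns1, ns2⟩ := hrep _ e
  set a' : Fin k → M := (⇑σ)^[n] ∘ a with ha'
  set b' : Fin k → M := (⇑σ)^[n] ∘ b with hb'
  have ea : ∀ i, e (E (Sum.inr (Sum.inl i))) = a i := fun i => by simp [e, big]
  have eb : ∀ i, e (E (Sum.inr (Sum.inr i))) = b i := fun i => by simp [e, big]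
  have ec : ∀ i, e (E (Sum.inl (Sum.inl i))) = p.c i := fun i => by simp [e, big]
  have ed : ∀ i, e (E (Sum.inl (Sum.inr i))) = p.d i := fun i => by simp [e, big]
  have ha'b' : sameTypeL L a' b' :=
    stl_trans (stl_symm (stl_iter σ n a)) (stl_trans hab (stl_iter σ n b))
  -- Step 1: tp(c,a') = tp(c,b')
  have S1 : sameTypeL L (Sum.elim p.c a') (Sum.elim p.c b') := by
    have h1 := ns1 k (fun i => E (Sum.inr (Sum.inl i))) (fun i => E (Sum.inr (Sum.inr i)))
      (stl_congr (fun i => by simp [ha', Function.comp, ea]) (fun i => by simp [hb', Function.comp, eb])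
        ha'b')
    have h2 := stl_comp h1 (Sum.map (fun i => E (Sum.inl (Sum.inl i))) (id : Fin k → Fin k))
    refine stl_congr (fun i => ?_) (fun i => ?_) h2 <;>
      rcases i with i | i <;> simp [Function.comp, ec, ea, eb, ha', hb']
  -- Step 2: tp(c,b') = tp(d,b')
  have S2 : sameTypeL L (Sum.elim p.c b') (Sum.elim p.d b') := by
    have h1 := ns2 K (fun i => E (Sum.inl (Sum.inl i))) (fun i => E (Sum.inl (Sum.inr i)))
      (stl_congr (fun i => by simp [Function.comp, ec]) (fun i => by simp [Function.comp, ed])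
        p.good)
    have h2 := stl_comp h1
      (Sum.elim (fun i : Fin K => (Sum.inr i : Fin ((K+K)+(k+k)) ⊕ Fin K))
        (fun j : Fin k => Sum.inl (E (Sum.inr (Sum.inr j)))))
    refine stl_congr (fun i => ?_) (fun i => ?_) h2 <;>
      rcases i with i | i <;> simp [Function.comp, ec, ed, eb, hb']
  have S : sameTypeL L (Sum.elim p.c a') (Sum.elim p.d b') := stl_trans S1 S2
  have Sfin : sameTypeL L (Fin.append p.c a') (Fin.append p.d b') := by
    have h2 := stl_comp S (finSumFinEquiv.symm : Fin (K + k) → Fin K ⊕ Fin k)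
    refine stl_congr (fun i => ?_) (fun i => ?_) h2 <;>
    · refine Fin.addCases (fun j => ?_) (fun j => ?_) i <;> simp <;> rw [finSumFinEquiv_symm_apply_natAdd] <;> simp
  refine ⟨⟨K + k, Fin.append p.c a', Fin.append p.d b', Sfin⟩,
    ⟨Nat.le_add_right _ _, fun i => ?_⟩, n, fun i => ⟨Fin.natAdd K i, by simp [ha'], by simp [hb']⟩⟩
  have ecast : Fin.castLE (Nat.le_add_right K k) i = Fin.castAdd k i := rfl
  rw [ecast]; simp

theorem mem_c_mono {p q : Cfg L M} (h : p.Le q) {m : M} :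
    (∃ i, p.c i = m) → ∃ i, q.c i = m := by
  rintro ⟨i, hi⟩; exact ⟨Fin.castLE h.choose i, ((h.choose_spec i).1).trans hi⟩

theorem mem_d_mono {p q : Cfg L M} (h : p.Le q) {m : M} :
    (∃ i, p.d i = m) → ∃ i, q.d i = m := by
  rintro ⟨i, hi⟩; exact ⟨Fin.castLE h.choose i, ((h.choose_spec i).2).trans hi⟩

theorem pair_mono {p q : Cfg L M} (h : p.Le q) {m m' : M} :
    (∃ j, p.c j = m ∧ p.d j = m') → ∃ j, q.c j = m ∧ q.d j = m' := by
  rintro ⟨j, hj1, hj2⟩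
  exact ⟨Fin.castLE h.choose j, ((h.choose_spec j).1).trans hj1, ((h.choose_spec j).2).trans hj2⟩

theorem stepEx
    (hhom : ∀ (k : ℕ) (x y : Fin k → M), sameTypeL L x y →
      ∃ τ : M ≃[L] M, ∀ i, τ (x i) = y i)
    (σ : M ≃[L] M)
    (hrep : ∀ (k : ℕ) (c : Fin k → M), ∃ n : ℕ,
      nonSplitL L c ((⇑σ)^[n] ∘ c) ∧ nonSplitL L ((⇑σ)^[n] ∘ c) c)
    (g : ℕ → M) (req : ℕ → (k : ℕ) × (Fin k → M) × (Fin k → M))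
    (p : Cfg L M) (s : ℕ) :
    ∃ q : Cfg L M, p.Le q ∧ (∃ i, q.c i = g s) ∧ (∃ i, q.d i = g s) ∧
      (sameTypeL L (req s).2.1 (req s).2.2 →
        ∃ n : ℕ, ∀ i, ∃ j, q.c j = (⇑σ)^[n] ((req s).2.1 i) ∧ q.d j = (⇑σ)^[n] ((req s).2.2 i)) := by
  classical
  obtain ⟨q1, h1, hc1⟩ := extend_dom hhom p (g s)
  obtain ⟨q2, h2, hd2⟩ := extend_ran hhom q1 (g s)
  by_cases hst : sameTypeL L (req s).2.1 (req s).2.2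
  · obtain ⟨q3, h3, n, hn⟩ := handle_req σ hrep q2 hst
    exact ⟨q3, (h1.trans h2).trans h3, mem_c_mono (h2.trans h3) ⟨_, hc1.choose_spec⟩,
      mem_d_mono h3 ⟨_, hd2.choose_spec⟩, fun _ => ⟨n, hn⟩⟩
  · exact ⟨q2, h1.trans h2, mem_c_mono h2 ⟨_, hc1.choose_spec⟩, hd2, fun h => absurd h hst⟩

end T

/-- If the automorphism group of a countable homogeneous structure `M` contains a
repulsive automorphism `σ`, then it has a cyclically dense conjugacy class: there is `τ`
with `{σⁿ τ σ⁻ⁿ : n ∈ ℤ}` dense; in particular `Aut(M)` is topologically 2-generated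
(the subgroup generated by `σ` and `τ` is dense).  Density in the pointwise convergence
topology is expressed via the basic open sets `U_{a,b}`. -/
theorem stmt_17 {L : Language} {M : Type*} [L.Structure M] [Countable M]
    (hhom : ∀ (k : ℕ) (x y : Fin k → M), sameTypeL L x y →
      ∃ τ : M ≃[L] M, ∀ i, τ (x i) = y i)
    (σ : M ≃[L] M)
    (hrep : ∀ (k : ℕ) (c : Fin k → M), ∃ n : ℕ,
      nonSplitL L c ((⇑σ)^[n] ∘ c) ∧ nonSplitL L ((⇑σ)^[n] ∘ c) c) :
    ∃ τ : M ≃[L] M,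
      (∀ (k : ℕ) (a b : Fin k → M), (∃ ρ : M ≃[L] M, ∀ i, ρ (a i) = b i) →
        ∃ n : ℤ, ∀ i,
          (σ.toEquiv ^ n) (τ ((σ.toEquiv ^ (-n)) (a i))) = b i) ∧
      (∀ (k : ℕ) (a b : Fin k → M), (∃ ρ : M ≃[L] M, ∀ i, ρ (a i) = b i) →
        ∃ γ ∈ Subgroup.closure ({σ.toEquiv, τ.toEquiv} : Set (Equiv.Perm M)),
          ∀ i, γ (a i) = b i) := by
  classical
  rcases isEmpty_or_nonempty M with hM | hM
  · exact ⟨σ, fun k a b _ => ⟨0, fun i => (IsEmpty.false (a i)).elim⟩,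
      fun k a b _ => ⟨σ.toEquiv, Subgroup.subset_closure (Set.mem_insert _ _),
        fun i => (IsEmpty.false (a i)).elim⟩⟩
  have hne : Nonempty ((k : ℕ) × (Fin k → M) × (Fin k → M)) := ⟨⟨0, Fin.elim0, Fin.elim0⟩⟩
  obtain ⟨g, hg⟩ := exists_surjective_nat M
  obtain ⟨req, hreq⟩ := exists_surjective_nat ((k : ℕ) × (Fin k → M) × (Fin k → M))
  choose step hstep using T.stepEx hhom σ hrep g req
  set chain : ℕ → T.Cfg L M :=
    fun s => Nat.rec ⟨0, Fin.elim0, Fin.elim0, T.stl_refl _⟩ (fun s p => step p s) s with hchain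
  have hmono : ∀ s t, s ≤ t → (chain s).Le (chain t) := by
    intro s t h
    induction t, h using Nat.le_induction with
    | base => exact T.Cfg.Le.refl _
    | succ t ht ih => exact ih.trans ((hstep (chain t) t).1)
  have coh : ∀ s t (i : Fin (chain s).k) (j : Fin (chain t).k),
      (chain s).c i = (chain t).c j → (chain s).d i = (chain t).d j := by
    intro s t i j hij
    rcases le_total s t with h | h
    · obtain ⟨hk, hcd⟩ := hmono s t h
      have h1 : (chain t).c (Fin.castLE hk i) = (chain t).c j := by rw [(hcd i).1]; exact hij
      have h2 := T.stl_eq (chain t).good h1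
      rw [(hcd i).2] at h2; exact h2
    · obtain ⟨hk, hcd⟩ := hmono t s h
      have h1 : (chain s).c i = (chain s).c (Fin.castLE hk j) := by rw [(hcd j).1]; exact hij
      have h2 := T.stl_eq (chain s).good h1
      rw [(hcd j).2] at h2; exact h2
  have coh' : ∀ s t (i : Fin (chain s).k) (j : Fin (chain t).k),
      (chain s).d i = (chain t).d j → (chain s).c i = (chain t).c j := by
    intro s t i j hij
    rcases le_total s t with h | h
    · obtain ⟨hk, hcd⟩ := hmono s t h
      have h1 : (chain t).d (Fin.castLE hk i) = (chain t).d j := by rw [(hcd i).2]; exact hij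
      have h2 := T.stl_eq (T.stl_symm (chain t).good) h1
      rw [(hcd i).1] at h2; exact h2
    · obtain ⟨hk, hcd⟩ := hmono t s h
      have h1 : (chain s).d i = (chain s).d (Fin.castLE hk j) := by rw [(hcd j).2]; exact hij
      have h2 := T.stl_eq (T.stl_symm (chain s).good) h1
      rw [(hcd j).1] at h2; exact h2
  have hdomall : ∀ m : M, ∃ s, ∃ i : Fin (chain s).k, (chain s).c i = m := by
    intro m; obtain ⟨s, rfl⟩ := hg m
    obtain ⟨i, hi⟩ := (hstep (chain s) s).2.1
    exact ⟨s + 1, i, hi⟩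
  choose ds di hdi using hdomall
  set f : M → M := fun m => (chain (ds m)).d (di m) with hf
  have f_spec : ∀ s (j : Fin (chain s).k), f ((chain s).c j) = (chain s).d j := by
    intro s j; exact coh _ _ _ _ (hdi _)
  have finj : Function.Injective f := by
    intro m m' h
    have h2 := coh' (ds m) (ds m') (di m) (di m') h
    rw [hdi, hdi] at h2; exact h2
  have fsurj : Function.Surjective f := by
    intro m; obtain ⟨s, rfl⟩ := hg m
    obtain ⟨i, hi⟩ := (hstep (chain s) s).2.2.1
    exact ⟨(chain (s + 1)).c i, (f_spec (s + 1) i).trans hi⟩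
  have ftp : ∀ (nn : ℕ) (x : Fin nn → M), sameTypeL L x (f ∘ x) := by
    intro nn x
    set S := Finset.univ.sup (fun i : Fin nn => ds (x i)) with hS
    have hle : ∀ i, ds (x i) ≤ S := fun i => Finset.le_sup (f := fun i => ds (x i)) (Finset.mem_univ i)
    have hj : ∀ i, ∃ jj : Fin (chain S).k, (chain S).c jj = x i ∧ (chain S).d jj = f (x i) := by
      intro i
      obtain ⟨hk, hcd⟩ := hmono _ _ (hle i)
      exact ⟨Fin.castLE hk (di (x i)), by rw [(hcd _).1, hdi], by rw [(hcd _).2]⟩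
    choose j hj1 hj2 using hj
    exact T.stl_congr (fun i => hj1 i) (fun i => hj2 i) (T.stl_comp (chain S).good j)
  have hmapfun : ∀ {nn : ℕ} (F : L.Functions nn) (x : Fin nn → M),
      f (Structure.funMap F x) = Structure.funMap F (f ∘ x) := by
    intro nn F x
    have h := ftp (nn + 1) (Fin.snoc x (Structure.funMap F x))
    have hφ := h (Language.Term.equal
      (Language.Term.func F (fun i => Language.Term.var (Fin.castSucc i)))
      (Language.Term.var (Fin.last nn)))
    simp only [Language.Formula.realize_equal, Language.Term.realize_func,
      Language.Term.realize_var, Function.comp_apply, Fin.snoc_castSucc, Fin.snoc_last] at hφ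
    have h2 := hφ.mp trivial
    exact h2.symm
  have hmaprel : ∀ {nn : ℕ} (r : L.Relations nn) (x : Fin nn → M),
      Structure.RelMap r (f ∘ x) ↔ Structure.RelMap r x := by
    intro nn r x
    have h := (ftp nn x (Language.Relations.formula r (fun i => Language.Term.var i))).symm
    simpa [Language.Formula.realize_rel, Function.comp_def] using h
  set τ : M ≃[L] M :=
    { toEquiv := Equiv.ofBijective f ⟨finj, fsurj⟩
      map_fun' := fun F x => hmapfun F x
      map_rel' := fun r x => hmaprel r x } with hτ
  have hreqsat : ∀ r : ((k : ℕ) × (Fin k → M) × (Fin k → M)), sameTypeL L r.2.1 r.2.2 →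
      ∃ n : ℕ, ∀ i, f ((⇑σ)^[n] (r.2.1 i)) = (⇑σ)^[n] (r.2.2 i) := by
    intro r hab
    obtain ⟨s, hs⟩ := hreq r
    subst hs
    have hprop := (hstep (chain s) s).2.2.2
    obtain ⟨n, hn⟩ := hprop hab
    refine ⟨n, fun i => ?_⟩
    obtain ⟨j, hj1, hj2⟩ := hn i
    rw [← hj1, ← hj2]
    exact f_spec (s + 1) j
  have powiter : ∀ (n : ℕ) (x : M), (σ.toEquiv ^ n) x = (⇑σ)^[n] x := by
    intro n
    induction n with
    | zero => intro x; rfl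
    | succ n ih =>
      intro x
      rw [pow_succ, Equiv.Perm.mul_apply, Function.iterate_succ_apply]
      exact ih (σ x)
  have hc1 : ∀ (k : ℕ) (a b : Fin k → M), (∃ ρ : M ≃[L] M, ∀ i, ρ (a i) = b i) →
      ∃ n : ℤ, ∀ i, (σ.toEquiv ^ n) (τ ((σ.toEquiv ^ (-n)) (a i))) = b i := by
    rintro k a b ⟨ρ, hρ⟩
    have hab : sameTypeL L a b := T.stl_congr (fun _ => rfl) hρ (T.stl_equiv ρ a)
    obtain ⟨n, hn⟩ := hreqsat ⟨k, a, b⟩ hab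
    refine ⟨-(n : ℤ), fun i => ?_⟩
    simp only [neg_neg, zpow_neg, zpow_natCast]
    have h1 : (σ.toEquiv ^ n) (a i) = (⇑σ)^[n] (a i) := powiter n (a i)
    rw [h1]
    have h2 : τ ((⇑σ)^[n] (a i)) = (⇑σ)^[n] (b i) := hn i
    rw [h2, ← powiter n (b i)]
    exact (σ.toEquiv ^ n).symm_apply_apply _
  refine ⟨τ, hc1, ?_⟩
  intro k a b hab'
  obtain ⟨n, hn⟩ := hc1 k a b hab'
  refine ⟨σ.toEquiv ^ n * (τ.toEquiv * σ.toEquiv ^ (-n)), ?_, fun i => ?_⟩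
  · have hσm : σ.toEquiv ∈ Subgroup.closure ({σ.toEquiv, τ.toEquiv} : Set (Equiv.Perm M)) :=
      Subgroup.subset_closure (Set.mem_insert _ _)
    have hτm : τ.toEquiv ∈ Subgroup.closure ({σ.toEquiv, τ.toEquiv} : Set (Equiv.Perm M)) :=
      Subgroup.subset_closure (Set.mem_insert_of_mem _ rfl)
    exact mul_mem (zpow_mem hσm n) (mul_mem hτm (zpow_mem hσm (-n)))
  · exact hn i
end
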